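/- Fix a positive integer i > 1 and let S(i) be the set of positive integers coprime to i, directed by divisibility. Let ℓ be the union (direct limit) of the fields F_{2^u} for u ∈ S(i), and let Õ be the union of the ovals O(i,u) = {(1:t:t^{2^i}) : t ∈ F_{2^u}} ∪ {(0:0:1)} inside PG(2,ℓ). Then Õ is an oval of PG(2,ℓ) with nucleus (0:1:0): every line meets Õ in at most two points, and every line meeting Õ ∪ {(0:1:0)} in at least one point meets it in exactly two points. -/

import Mathlib

/-- gcd of Mersenne-type numbers: if `i` and `u` are coprime then so are `2^i-1` and `2^u-1`. -/
lemma two_pow_coprime {i u : ℕ} (hi : 0 < i) (hu : 0 < u) (h : Nat.Coprime i u) :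
    Nat.Coprime (2 ^ i - 1) (2 ^ u - 1) := by
  set d := Nat.gcd (2 ^ i - 1) (2 ^ u - 1) with hd
  have h2i : 2 ≤ 2 ^ i := Nat.one_lt_two_pow_iff.mpr hi.ne'
  have h2u : 2 ≤ 2 ^ u := Nat.one_lt_two_pow_iff.mpr hu.ne'
  have hdvd1 : d ∣ 2 ^ i - 1 := Nat.gcd_dvd_left _ _
  have hdvd2 : d ∣ 2 ^ u - 1 := Nat.gcd_dvd_right _ _
  have hdne : d ≠ 0 := by
    intro h0
    have := Nat.eq_zero_of_gcd_eq_zero_left (hd ▸ h0)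
    omega
  haveI : NeZero d := ⟨hdne⟩
  have key : ∀ m : ℕ, d ∣ 2 ^ m - 1 → (2 : ZMod d) ^ m = 1 := by
    intro m hm
    have h1 : ((2 ^ m - 1 : ℕ) : ZMod d) = 0 := (ZMod.natCast_eq_zero_iff _ _).mpr hm
    have h2 : (1:ℕ) ≤ 2 ^ m := Nat.one_le_two_pow
    rw [Nat.cast_sub h2] at h1
    push_cast at h1
    rw [sub_eq_zero] at h1
    exact h1
  have o1 : orderOf (2 : ZMod d) ∣ Nat.gcd i u :=
    Nat.dvd_gcd (orderOf_dvd_of_pow_eq_one (key i hdvd1)) (orderOf_dvd_of_pow_eq_one (key u hdvd2))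
  rw [h] at o1
  have h21 : (2 : ZMod d) = 1 := orderOf_eq_one_iff.mp (Nat.dvd_one.mp o1)
  have h10 : ((1:ℕ) : ZMod d) = 0 := by
    push_cast
    have h2' : (2 : ZMod d) = 1 + 1 := by norm_num
    rw [h2'] at h21
    linear_combination h21
  have : d ∣ 1 := (ZMod.natCast_eq_zero_iff 1 d).mp h10
  exact Nat.dvd_one.mp this

section field
variable {ℓ : Type} [Field ℓ]

lemma fix_pow_sub_one {z : ℓ} (hz : z ≠ 0) {u : ℕ} (hfix : z ^ 2 ^ u = z) :
    z ^ (2 ^ u - 1) = 1 := by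
  have h1 : (1:ℕ) ≤ 2 ^ u := Nat.one_le_two_pow
  have hm : z ^ (2 ^ u - 1) * z = z := by
    rw [← pow_succ, Nat.sub_add_cancel h1, hfix]
  exact mul_right_cancel₀ hz (hm.trans (one_mul z).symm)

lemma root_one_eq_one {i : ℕ} (hi : 1 < i)
    (hunion : ∀ x : ℓ, ∃ u : ℕ, 0 < u ∧ Nat.Coprime u i ∧ x ^ 2 ^ u = x)
    {z : ℓ} (hz : z ≠ 0) (h : z ^ (2 ^ i - 1) = 1) : z = 1 := by
  obtain ⟨u, hu, hcop, hfix⟩ := hunion z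
  have h2 : z ^ (2 ^ u - 1) = 1 := fix_pow_sub_one hz hfix
  have o1 : orderOf z ∣ Nat.gcd (2 ^ i - 1) (2 ^ u - 1) :=
    Nat.dvd_gcd (orderOf_dvd_of_pow_eq_one h) (orderOf_dvd_of_pow_eq_one h2)
  rw [two_pow_coprime (by omega) hu (Nat.coprime_comm.mp hcop)] at o1
  exact orderOf_eq_one_iff.mp (Nat.dvd_one.mp o1)

/-- the map `x ↦ x^(2^i-1)` is injective on nonzero elements of `ℓ`. -/
lemma pow_q_inj {i : ℕ} (hi : 1 < i)
    (hunion : ∀ x : ℓ, ∃ u : ℕ, 0 < u ∧ Nat.Coprime u i ∧ x ^ 2 ^ u = x)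
    {x y : ℓ} (hx : x ≠ 0) (hy : y ≠ 0)
    (h : x ^ (2 ^ i - 1) = y ^ (2 ^ i - 1)) : x = y := by
  have h1 : (x / y) ^ (2 ^ i - 1) = 1 := by
    rw [div_pow, h, div_self (pow_ne_zero _ hy)]
  have h2 := root_one_eq_one hi hunion (div_ne_zero hx hy) h1
  field_simp at h2
  exact h2

lemma exists_q_root {i : ℕ}
    (hunion : ∀ x : ℓ, ∃ u : ℕ, 0 < u ∧ Nat.Coprime u i ∧ x ^ 2 ^ u = x)
    (x : ℓ) : ∃ t : ℓ, t ^ 2 ^ i = x := by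
  obtain ⟨u, hu, -, hfix⟩ := hunion x
  have key : ∀ m : ℕ, x ^ 2 ^ (u * m) = x := by
    intro m
    induction m with
    | zero => simp
    | succ m ih => rw [Nat.mul_succ, pow_add, pow_mul, ih, hfix]
  refine ⟨x ^ 2 ^ (u * i - i), ?_⟩
  rw [← pow_mul, ← pow_add, Nat.sub_add_cancel (Nat.le_mul_of_pos_left i hu), key i]

lemma exists_root_q_sub_one {i : ℕ} (hi : 1 < i)
    (hunion : ∀ x : ℓ, ∃ u : ℕ, 0 < u ∧ Nat.Coprime u i ∧ x ^ 2 ^ u = x)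
    {w : ℓ} (hw : w ≠ 0) : ∃ s : ℓ, s ≠ 0 ∧ s ^ (2 ^ i - 1) = w := by
  obtain ⟨u, hu, hcop, hfix⟩ := hunion w
  have hw1 : w ^ (2 ^ u - 1) = 1 := fix_pow_sub_one hw hfix
  by_cases hn : 2 ^ u - 1 = 1
  · refine ⟨1, one_ne_zero, ?_⟩
    rw [one_pow]
    rw [hn, pow_one] at hw1
    exact hw1.symm
  · have h2u : 2 ≤ 2 ^ u := Nat.one_lt_two_pow_iff.mpr hu.ne'
    have hn1 : 1 < 2 ^ u - 1 := by omega
    have hcop' : Nat.Coprime (2 ^ i - 1) (2 ^ u - 1) :=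
      two_pow_coprime (by omega) hu (Nat.coprime_comm.mp hcop)
    obtain ⟨m, -, hm⟩ := Nat.exists_mul_mod_eq_one_of_coprime hcop' hn1
    refine ⟨w ^ m, pow_ne_zero _ hw, ?_⟩
    rw [← pow_mul]
    have hdm := Nat.div_add_mod ((2 ^ i - 1) * m) (2 ^ u - 1)
    rw [hm] at hdm
    rw [mul_comm m]
    have : (2 ^ i - 1) * m = (2 ^ u - 1) * ((2 ^ i - 1) * m / (2 ^ u - 1)) + 1 := by omega
    rw [this, pow_add, pow_mul, hw1, one_pow, one_mul, pow_one]

end field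

/-- The limit oval `Õ = ⋃_{u ∈ S(i)} O(i,u)` inside `PG(2,ℓ)`, where `ℓ = ⋃ F_{2^u}`:
with normalized homogeneous coordinates it is `{(1 : t : t^{2^i}) : t ∈ ℓ} ∪ {(0:0:1)}`. -/
def limitOval (i : ℕ) (ℓ : Type) [Field ℓ] : Set (Fin 3 → ℓ) :=
  {x | (∃ t : ℓ, x = ![1, t, t ^ 2 ^ i]) ∨ x = ![0, 0, 1]}

/-- fix `i > 1` and let `ℓ` be the directed union of the fields `F_{2^u}` over
the set `S(i)` of positive integers `u` coprime to `i` (a field of characteristic 2, each of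
whose elements lies in some `F_{2^u}` with `u` coprime to `i`, and containing a subfield of
order `2^u` for every such `u`).  Then `Õ` is an oval of `PG(2,ℓ)` with nucleus `(0:1:0)`:
every line meets `Õ` in at most two points, and every line meeting `Õ ∪ {(0:1:0)}` in at
least one point meets it in exactly two points. -/
theorem stmt15 (i : ℕ) (hi : 1 < i) (ℓ : Type) [Field ℓ] [CharP ℓ 2]
    (hunion : ∀ x : ℓ, ∃ u : ℕ, 0 < u ∧ Nat.Coprime u i ∧ x ^ 2 ^ u = x)
    (hall : ∀ u : ℕ, 0 < u → Nat.Coprime u i → ∃ S : Subfield ℓ, Nat.card S = 2 ^ u) :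
    (∀ φ : (Fin 3 → ℓ) →ₗ[ℓ] ℓ, φ ≠ 0 →
      ∀ x ∈ limitOval i ℓ, ∀ y ∈ limitOval i ℓ, ∀ z ∈ limitOval i ℓ,
        φ x = 0 → φ y = 0 → φ z = 0 → x = y ∨ y = z ∨ x = z) ∧
    (∀ φ : (Fin 3 → ℓ) →ₗ[ℓ] ℓ, φ ≠ 0 →
      (∃ x ∈ limitOval i ℓ ∪ {![0, 1, 0]}, φ x = 0) →
      ∃ x ∈ limitOval i ℓ ∪ {![0, 1, 0]}, ∃ y ∈ limitOval i ℓ ∪ {![0, 1, 0]},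
        x ≠ y ∧ φ x = 0 ∧ φ y = 0 ∧
        ∀ z ∈ limitOval i ℓ ∪ {![0, 1, 0]}, φ z = 0 → z = x ∨ z = y) := by
  have hq1 : (1:ℕ) ≤ 2 ^ i := Nat.one_le_two_pow
  have hpow : ∀ s : ℓ, s ^ 2 ^ i = s ^ (2 ^ i - 1) * s := by
    intro s
    rw [← pow_succ, Nat.sub_add_cancel hq1]
  have rep : ∀ (φ : (Fin 3 → ℓ) →ₗ[ℓ] ℓ) (v : Fin 3 → ℓ),
      φ v = v 0 * φ ![1,0,0] + v 1 * φ ![0,1,0] + v 2 * φ ![0,0,1] := by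
    intro φ v
    have hv : v = v 0 • ![(1:ℓ),0,0] + v 1 • ![0,1,0] + v 2 • ![0,0,1] := by
      funext j; fin_cases j <;> simp
    conv_lhs => rw [hv]
    rw [map_add, map_add, map_smul, map_smul, map_smul, smul_eq_mul, smul_eq_mul, smul_eq_mul]
  have repP : ∀ (φ : (Fin 3 → ℓ) →ₗ[ℓ] ℓ) (t : ℓ),
      φ ![1, t, t ^ 2 ^ i] = φ ![1,0,0] + t * φ ![0,1,0] + t ^ 2 ^ i * φ ![0,0,1] := by
    intro φ t
    rw [rep]
    simp
  have hnz : ∀ φ : (Fin 3 → ℓ) →ₗ[ℓ] ℓ, φ ≠ 0 →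
      φ ![1,0,0] = 0 → φ ![0,1,0] = 0 → φ ![0,0,1] = 0 → False := by
    intro φ hφ hA hB hC
    exact hφ (LinearMap.ext fun v => by rw [rep φ v, hA, hB, hC]; simp)
  have Pinj : ∀ t s : ℓ, (![1, t, t ^ 2 ^ i] : Fin 3 → ℓ) = ![1, s, s ^ 2 ^ i] → t = s := by
    intro t s he
    simpa using congrFun he 1
  have PneInf : ∀ t : ℓ, (![1, t, t ^ 2 ^ i] : Fin 3 → ℓ) ≠ ![0, 0, 1] := by
    intro t he
    simpa using congrFun he 0
  have PneN : ∀ t : ℓ, (![1, t, t ^ 2 ^ i] : Fin 3 → ℓ) ≠ ![0, 1, 0] := by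
    intro t he
    simpa using congrFun he 0
  have InfneN : (![0, 0, 1] : Fin 3 → ℓ) ≠ ![0, 1, 0] := by
    intro he
    simpa using congrFun he 1
  constructor
  · -- every line meets the oval in at most two points
    intro φ hφ x hx y hy z hz hpx hpy hpz
    -- a line through two distinct affine points misses (0:0:1)
    have mainInf : ∀ a b : ℓ, φ ![1, a, a ^ 2 ^ i] = 0 → φ ![1, b, b ^ 2 ^ i] = 0 →
        φ ![0,0,1] = 0 → a = b := by
      intro a b ha hb hC
      rw [repP, hC, mul_zero, add_zero] at ha hb
      by_cases hB : φ ![0,1,0] = 0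
      · exfalso
        rw [hB, mul_zero, add_zero] at ha
        exact hnz φ hφ ha hB hC
      · have h1 : (a - b) * φ ![0,1,0] = 0 := by linear_combination ha - hb
        exact sub_eq_zero.mp ((mul_eq_zero.mp h1).resolve_right hB)
    -- three affine points on a line: two parameters coincide
    have main : ∀ a b c : ℓ, φ ![1, a, a ^ 2 ^ i] = 0 → φ ![1, b, b ^ 2 ^ i] = 0 →
        φ ![1, c, c ^ 2 ^ i] = 0 → a = b ∨ b = c ∨ a = c := by
      intro a b c ha hb hc
      by_contra hcon
      push_neg at hcon
      obtain ⟨hab, hbc, hac⟩ := hcon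
      rw [repP] at ha hb hc
      have hs0 : a - b ≠ 0 := sub_ne_zero.mpr hab
      have hr0 : a - c ≠ 0 := sub_ne_zero.mpr hac
      have hsubb : (a - b) ^ 2 ^ i = a ^ 2 ^ i - b ^ 2 ^ i := sub_pow_char_pow ..
      have hsubc : (a - c) ^ 2 ^ i = a ^ 2 ^ i - c ^ 2 ^ i := sub_pow_char_pow ..
      have hs : (a - b) * φ ![0,1,0] + (a - b) ^ (2 ^ i - 1) * ((a - b) * φ ![0,0,1]) = 0 := by
        linear_combination ha - hb + φ ![0,0,1] * hsubb - φ ![0,0,1] * hpow (a - b)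
      have hr : (a - c) * φ ![0,1,0] + (a - c) ^ (2 ^ i - 1) * ((a - c) * φ ![0,0,1]) = 0 := by
        linear_combination ha - hc + φ ![0,0,1] * hsubc - φ ![0,0,1] * hpow (a - c)
      by_cases hC : φ ![0,0,1] = 0
      · rw [hC, mul_zero, mul_zero, add_zero] at hs
        have hB : φ ![0,1,0] = 0 := (mul_eq_zero.mp hs).resolve_left hs0
        rw [hB, hC, mul_zero, mul_zero, add_zero, add_zero] at ha
        exact hnz φ hφ ha hB hC
      · have key : (a - b) ^ (2 ^ i - 1) * ((a - b) * (a - c) * φ ![0,0,1]) =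
            (a - c) ^ (2 ^ i - 1) * ((a - b) * (a - c) * φ ![0,0,1]) := by
          linear_combination (a - c) * hs - (a - b) * hr
        have h2 := mul_right_cancel₀ (mul_ne_zero (mul_ne_zero hs0 hr0) hC) key
        have h3 := pow_q_inj hi hunion hs0 hr0 h2
        exact hbc (by linear_combination -h3)
    rcases hx with ⟨a, rfl⟩ | rfl
    · rcases hy with ⟨b, rfl⟩ | rfl
      · rcases hz with ⟨c, rfl⟩ | rfl
        · rcases main a b c hpx hpy hpz with h | h | h
          · exact Or.inl (by rw [h])
          · exact Or.inr (Or.inl (by rw [h]))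
          · exact Or.inr (Or.inr (by rw [h]))
        · exact Or.inl (by rw [mainInf a b hpx hpy hpz])
      · rcases hz with ⟨c, rfl⟩ | rfl
        · exact Or.inr (Or.inr (by rw [mainInf a c hpx hpz hpy]))
        · exact Or.inr (Or.inl rfl)
    · rcases hy with ⟨b, rfl⟩ | rfl
      · rcases hz with ⟨c, rfl⟩ | rfl
        · exact Or.inr (Or.inl (by rw [mainInf b c hpy hpz hpx]))
        · exact Or.inr (Or.inr rfl)
      · exact Or.inl rfl
  · -- every line meeting the extended oval meets it in exactly two points
    intro φ hφ hmeet
    obtain ⟨x0, hx0, hφx0⟩ := hmeet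
    have memP : ∀ t : ℓ, (![1, t, t ^ 2 ^ i] : Fin 3 → ℓ) ∈ limitOval i ℓ ∪ {![0,1,0]} :=
      fun t => Set.mem_union_left _ (Or.inl ⟨t, rfl⟩)
    have memInf : (![0,0,1] : Fin 3 → ℓ) ∈ limitOval i ℓ ∪ {![0,1,0]} :=
      Set.mem_union_left _ (Or.inr rfl)
    have memN : (![0,1,0] : Fin 3 → ℓ) ∈ limitOval i ℓ ∪ {![0,1,0]} :=
      Set.mem_union_right _ rfl
    by_cases hC : φ ![0,0,1] = 0
    · by_cases hB : φ ![0,1,0] = 0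
      · -- the line `Z = 0` through the nucleus and (0:0:1)
        have hA : φ ![1,0,0] ≠ 0 := fun h => hnz φ hφ h hB hC
        refine ⟨![0,0,1], memInf, ![0,1,0], memN, InfneN, hC, hB, ?_⟩
        rintro z ((⟨t, rfl⟩ | rfl) | rfl) hφz
        · exfalso
          rw [repP, hB, hC, mul_zero, mul_zero, add_zero, add_zero] at hφz
          exact hA hφz
        · exact Or.inl rfl
        · exact Or.inr rfl
      · -- a line through (0:0:1) but not the nucleus: one affine point
        obtain ⟨t0, ht0⟩ : ∃ t0 : ℓ, φ ![1,0,0] + t0 * φ ![0,1,0] = 0 :=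
          ⟨-(φ ![1,0,0] / φ ![0,1,0]), by field_simp; ring⟩
        have hx1 : φ ![1, t0, t0 ^ 2 ^ i] = 0 := by
          rw [repP, hC, mul_zero, add_zero, ht0]
        refine ⟨![1, t0, t0 ^ 2 ^ i], memP t0, ![0,0,1], memInf, PneInf t0, hx1, hC, ?_⟩
        rintro z ((⟨t, rfl⟩ | rfl) | rfl) hφz
        · rw [repP, hC, mul_zero, add_zero] at hφz
          have h1 : (t - t0) * φ ![0,1,0] = 0 := by linear_combination hφz - ht0
          have h2 := sub_eq_zero.mp ((mul_eq_zero.mp h1).resolve_right hB)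
          exact Or.inl (by rw [h2])
        · exact Or.inr rfl
        · exact absurd hφz hB
    · by_cases hB : φ ![0,1,0] = 0
      · -- a line through the nucleus: one affine point
        obtain ⟨t0, ht0⟩ := exists_q_root hunion (-(φ ![1,0,0] / φ ![0,0,1]))
        have hx1 : φ ![1, t0, t0 ^ 2 ^ i] = 0 := by
          rw [repP, hB, mul_zero, add_zero, ht0]
          field_simp
          ring
        refine ⟨![1, t0, t0 ^ 2 ^ i], memP t0, ![0,1,0], memN, PneN t0, hx1, ?_, ?_⟩
        · exact hB
        · rintro z ((⟨t, rfl⟩ | rfl) | rfl) hφz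
          · rw [repP, hB, mul_zero, add_zero] at hφz
            rw [repP, hB, mul_zero, add_zero] at hx1
            have h1 : (t ^ 2 ^ i - t0 ^ 2 ^ i) * φ ![0,0,1] = 0 := by
              linear_combination hφz - hx1
            have h2 := (mul_eq_zero.mp h1).resolve_right hC
            have hsub : (t - t0) ^ 2 ^ i = t ^ 2 ^ i - t0 ^ 2 ^ i := sub_pow_char_pow ..
            have h3 : (t - t0) ^ 2 ^ i = 0 := by rw [hsub, h2]
            have h4 : t - t0 = 0 := pow_eq_zero_iff (by positivity) |>.mp h3
            have h5 : t = t0 := by linear_combination h4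
            exact Or.inl (by rw [h5])
          · exact absurd hφz hC
          · exact Or.inr rfl
      · -- a secant line: x0 must be affine, and there is exactly one other affine point
        have hBN : φ ![0,1,0] ≠ 0 := hB
        obtain ⟨a, rfl⟩ : ∃ a : ℓ, x0 = ![1, a, a ^ 2 ^ i] := by
          rcases hx0 with (⟨a, rfl⟩ | rfl) | rfl
          · exact ⟨a, rfl⟩
          · exact absurd hφx0 hC
          · exact absurd hφx0 hB
        rw [repP] at hφx0
        have hw : -(φ ![0,1,0] / φ ![0,0,1]) ≠ 0 := neg_ne_zero.mpr (div_ne_zero hB hC)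
        obtain ⟨s, hs0, hs⟩ := exists_root_q_sub_one hi hunion hw
        have hs' : s ^ (2 ^ i - 1) * φ ![0,0,1] = -(φ ![0,1,0]) := by
          rw [hs]
          field_simp
        have hadd : (a + s) ^ 2 ^ i = a ^ 2 ^ i + s ^ 2 ^ i := add_pow_char_pow ..
        have hb1 : φ ![1, a + s, (a + s) ^ 2 ^ i] = 0 := by
          rw [repP, hadd, hpow s]
          linear_combination hφx0 + s * hs'
        have hxy : (![1, a, a ^ 2 ^ i] : Fin 3 → ℓ) ≠ ![1, a + s, (a + s) ^ 2 ^ i] := by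
          intro he
          exact hs0 (by linear_combination -(Pinj _ _ he))
        refine ⟨![1, a, a ^ 2 ^ i], memP a, ![1, a + s, (a + s) ^ 2 ^ i], memP (a + s),
          hxy, by rw [repP]; exact hφx0, hb1, ?_⟩
        rintro z ((⟨t, rfl⟩ | rfl) | rfl) hφz
        · rw [repP] at hφz
          by_cases hta : t = a
          · exact Or.inl (by rw [hta])
          · have hd0 : t - a ≠ 0 := sub_ne_zero.mpr hta
            have hsub : (t - a) ^ 2 ^ i = t ^ 2 ^ i - a ^ 2 ^ i := sub_pow_char_pow ..
            have key : (t - a) ^ (2 ^ i - 1) * ((t - a) * φ ![0,0,1]) =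
                s ^ (2 ^ i - 1) * ((t - a) * φ ![0,0,1]) := by
              linear_combination hφz - hφx0 + φ ![0,0,1] * hsub -
                φ ![0,0,1] * hpow (t - a) - (t - a) * hs'
            have h2 := mul_right_cancel₀ (mul_ne_zero hd0 hC) key
            have h3 := pow_q_inj hi hunion hd0 hs0 h2
            have h4 : t = a + s := by linear_combination h3
            exact Or.inr (by rw [h4])
        · exact absurd hφz hC
        · exact absurd hφz hB
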